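/- There exist a constant ε₀ > 0 and a function δ : (0, ε₀) → (0, 1) such that for every ε ∈ (0, ε₀), every field K, every n ∈ ℕ, and every function φ : {0,1,…,n} → K, the 2^n × 2^n matrix M over K, with rows and columns indexed by {0,1}^n and defined by M(x,y) = φ(⟨x,y⟩) (i.e., the truth table matrix of the function IP_f(x,y) = f(x₁∧y₁,…,xₙ∧yₙ) for the symmetric function f(z) = φ(|z|)), admits a 2^n × 2^n matrix B over K with rank(B) ≤ 2^{δ(ε)·n} differing from M in at most 2^{(1+ε)n} entries. -/

import Mathlib

open scoped Classical
open Finset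

noncomputable section

def ip {n : ℕ} (x y : Fin n → Bool) : ℕ :=
  (Finset.univ.filter (fun i => x i ∧ y i)).card

def wt {n : ℕ} (x : Fin n → Bool) : ℕ :=
  (Finset.univ.filter (fun i => x i)).card

def Had (K : Type) [Field K] (n : ℕ) : Matrix (Fin n → Bool) (Fin n → Bool) K :=
  Matrix.of fun x y => (-1 : K) ^ ip x y

def diffCount {n : ℕ} {K : Type} [Field K]
    (A B : Matrix (Fin n → Bool) (Fin n → Bool) K) : ℕ :=
  Nat.card {p : (Fin n → Bool) × (Fin n → Bool) // A p.1 p.2 ≠ B p.1 p.2}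

def ProbRankLE {n : ℕ} {K : Type} [Field K]
    (A : Matrix (Fin n → Bool) (Fin n → Bool) K) (ε r : ℝ) : Prop :=
  ∃ (s : Finset (Matrix (Fin n → Bool) (Fin n → Bool) K))
    (w : Matrix (Fin n → Bool) (Fin n → Bool) K → ℝ),
    (∀ M ∈ s, 0 ≤ w M) ∧ (∑ M ∈ s, w M) = 1 ∧
    (∀ M ∈ s, ((M.rank : ℝ)) ≤ r) ∧
    ∀ x y : Fin n → Bool, 1 - ε ≤ ∑ M ∈ s, (if M x y = A x y then w M else 0)

section RankLemmas
variable {K : Type} [Field K] {ι : Type} [Fintype ι] [DecidableEq ι]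

lemma matrix_rank_add_le (A B : Matrix ι ι K) : (A + B).rank ≤ A.rank + B.rank := by
  classical
  rw [Matrix.rank, Matrix.rank, Matrix.rank, Matrix.mulVecLin_add]
  have h : LinearMap.range (A.mulVecLin + B.mulVecLin) ≤
      LinearMap.range A.mulVecLin ⊔ LinearMap.range B.mulVecLin := by
    rintro z ⟨x, rfl⟩
    exact Submodule.add_mem_sup (LinearMap.mem_range_self _ x) (LinearMap.mem_range_self _ x)
  exact (Submodule.finrank_mono h).trans
    (Submodule.finrank_add_le_finrank_add_finrank _ _)

lemma matrix_rank_vecMulVec_le (w v : ι → K) : (Matrix.vecMulVec w v).rank ≤ 1 := by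
  classical
  rw [Matrix.vecMulVec_eq (Fin 1)]
  exact (Matrix.rank_mul_le_left _ _).trans
    ((Matrix.rank_le_card_width _).trans (by simp))

lemma matrix_rank_sum_le {α : Type} (s : Finset α) (f : α → Matrix ι ι K) :
    (∑ i ∈ s, f i).rank ≤ ∑ i ∈ s, (f i).rank := by
  classical
  induction s using Finset.cons_induction with
  | empty => simp [Matrix.rank_zero]
  | cons a s ha ih =>
    rw [Finset.sum_cons, Finset.sum_cons]
    exact (matrix_rank_add_le _ _).trans (Nat.add_le_add le_rfl ih)
end RankLemmas

lemma interp_exists (K : Type) [Field K] (d L : ℕ) (φ : ℕ → K) :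
    ∃ c : ℕ → K, ∀ m : ℕ, L ≤ m → m ≤ L + d →
      (∑ j ∈ Finset.range (d+1), c j * (Nat.choose m j : K)) = φ m := by
  classical
  set V : Matrix (Fin (d+1)) (Fin (d+1)) K :=
    Matrix.of (fun i j => (Nat.choose (L + (i:ℕ)) (j:ℕ) : K)) with hV
  set A : Matrix (Fin (d+1)) (Fin (d+1)) K :=
    Matrix.of (fun i t => (Nat.choose (i:ℕ) (t:ℕ) : K)) with hA
  set Bm : Matrix (Fin (d+1)) (Fin (d+1)) K :=
    Matrix.of (fun t j => if (t : ℕ) ≤ (j:ℕ) then (Nat.choose L ((j:ℕ) - (t:ℕ)) : K) else 0)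
    with hBm
  have hfact : V = A * Bm := by
    ext i j
    rw [Matrix.mul_apply]
    have h1 : ∑ t : Fin (d+1), A i t * Bm t j
        = ∑ t ∈ Finset.range (d+1), ((Nat.choose (i:ℕ) t : K) *
            if t ≤ (j:ℕ) then (Nat.choose L ((j:ℕ) - t) : K) else 0) := by
      rw [Finset.sum_range (fun t => _)]
      rfl
    have hsub : Finset.range ((j:ℕ)+1) ⊆ Finset.range (d+1) :=
      Finset.range_subset_range.mpr j.isLt
    have h2 : ∑ t ∈ Finset.range ((j:ℕ)+1), ((Nat.choose (i:ℕ) t : K) *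
            if t ≤ (j:ℕ) then (Nat.choose L ((j:ℕ) - t) : K) else 0)
        = ∑ t ∈ Finset.range (d+1), ((Nat.choose (i:ℕ) t : K) *
            if t ≤ (j:ℕ) then (Nat.choose L ((j:ℕ) - t) : K) else 0) :=
      Finset.sum_subset hsub (fun t _ ht => by
        rw [if_neg (by simpa using ht), mul_zero])
    rw [h1, ← h2]
    have h3 : (((i:ℕ) + L).choose (j:ℕ) : ℕ)
        = ∑ t ∈ Finset.range ((j:ℕ)+1), (i:ℕ).choose t * L.choose ((j:ℕ) - t) := by
      rw [Nat.add_choose_eq]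
      exact (Finset.Nat.sum_antidiagonal_eq_sum_range_succ
        (fun a b => (i:ℕ).choose a * L.choose b) (j:ℕ))
    have hVij : V i j = ((((i:ℕ) + L).choose (j:ℕ) : ℕ) : K) := by
      simp only [hV, Matrix.of_apply, Nat.add_comm L (i:ℕ)]
    rw [hVij, h3]
    push_cast
    exact Finset.sum_congr rfl (fun t ht =>
      by rw [if_pos (Nat.lt_succ_iff.mp (Finset.mem_range.mp ht))])
  have hdetA : A.det = 1 := by
    rw [Matrix.det_of_lowerTriangular A (by
      intro i j hij
      have : (i:ℕ) < (j:ℕ) := by exact_mod_cast (OrderDual.toDual_lt_toDual.mp hij)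
      simp only [hA, Matrix.of_apply]
      rw [Nat.choose_eq_zero_of_lt this, Nat.cast_zero])]
    simp [hA]
  have hdetB : Bm.det = 1 := by
    rw [Matrix.det_of_upperTriangular (by
      intro i j hij
      have : ¬ ((i:ℕ) ≤ (j:ℕ)) := by exact_mod_cast Nat.not_le.mpr hij
      simp only [hBm, Matrix.of_apply]
      rw [if_neg this])]
    simp [hBm]
  have hdet : IsUnit V.det := by
    rw [hfact, Matrix.det_mul, hdetA, hdetB]
    simp
  set c' : Fin (d+1) → K := (V⁻¹).mulVec (fun i : Fin (d+1) => φ (L + (i:ℕ))) with hc'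
  have hkey : V.mulVec c' = fun i : Fin (d+1) => φ (L + (i:ℕ)) := by
    rw [hc', Matrix.mulVec_mulVec, Matrix.mul_nonsing_inv _ hdet, Matrix.one_mulVec]
  refine ⟨fun j => if h : j < d+1 then c' ⟨j, h⟩ else 0, ?_⟩
  intro m hLm hmLd
  have him : m - L < d + 1 := by omega
  have hm' : L + (m - L) = m := by omega
  have h4 : ∑ j ∈ Finset.range (d+1), (if h : j < d+1 then c' ⟨j, h⟩ else 0) * (Nat.choose m j : K)
      = ∑ j : Fin (d+1), c' j * (Nat.choose m (j:ℕ) : K) := by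
    rw [Finset.sum_range (fun j => _)]
    exact Finset.sum_congr rfl (fun j _ => by rw [dif_pos j.isLt])
  rw [h4]
  have h5 : (V.mulVec c') ⟨m - L, him⟩ = φ m := by
    rw [hkey]
    show φ (L + (m - L)) = φ m
    rw [hm']
  rw [← h5]
  simp only [Matrix.mulVec, dotProduct, hV, Matrix.of_apply, hm']
  exact Finset.sum_congr rfl (fun j _ => mul_comm _ _)

def xorv {n : ℕ} (x y : Fin n → Bool) : Fin n → Bool := fun i => xor (x i) (y i)

section Comb
variable {n : ℕ}

lemma wt_le_n (x : Fin n → Bool) : wt x ≤ n := by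
  classical
  calc wt x ≤ (univ : Finset (Fin n)).card := Finset.card_filter_le _ _
  _ = n := by simp

lemma wt_add_wt (x y : Fin n → Bool) :
    wt x + wt y = 2 * ip x y + wt (xorv x y) ∧ ip x y + wt (xorv x y) ≤ n := by
  classical
  have hunion : (univ.filter (fun i => x i ∨ y i) : Finset (Fin n))
      = univ.filter (fun i => x i ∧ y i) ∪ univ.filter (fun i => xorv x y i) := by
    ext i
    simp only [Finset.mem_filter, Finset.mem_union, Finset.mem_univ, true_and, xorv]
    cases hx : x i <;> cases hy : y i <;> simp [hx, hy]
  have hdisj : Disjoint (univ.filter (fun i => x i ∧ y i) : Finset (Fin n))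
      (univ.filter (fun i => xorv x y i)) := by
    rw [Finset.disjoint_left]
    intro i hi1 hi2
    simp only [Finset.mem_filter, Finset.mem_univ, true_and, xorv] at hi1 hi2
    rcases hi1 with ⟨h1, h2⟩
    simp [h1, h2] at hi2
  have hcard : (univ.filter (fun i => x i ∨ y i) : Finset (Fin n)).card
      = ip x y + wt (xorv x y) := by
    rw [hunion, Finset.card_union_of_disjoint hdisj]; rfl
  have hmain : (univ.filter (fun i => x i ∨ y i) : Finset (Fin n)).card
        + (univ.filter (fun i => x i ∧ y i) : Finset (Fin n)).card
      = wt x + wt y := by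
    rw [Finset.filter_or, Finset.filter_and]
    exact Finset.card_union_add_card_inter _ _
  have hip : ip x y = (univ.filter (fun i => x i ∧ y i) : Finset (Fin n)).card := rfl
  have hn : (univ.filter (fun i => x i ∨ y i) : Finset (Fin n)).card ≤ n := by
    calc _ ≤ (univ : Finset (Fin n)).card := Finset.card_filter_le _ _
    _ = n := by simp
  omega

lemma card_wt_le (m : ℕ) :
    ((univ : Finset (Fin n → Bool)).filter (fun z => wt z ≤ m)).card
      ≤ ∑ t ∈ Finset.range (m+1), Nat.choose n t := by
  classical
  set T : Finset (Finset (Fin n)) :=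
    (Finset.range (m+1)).biUnion (fun t => Finset.univ.powersetCard t) with hT
  have hmaps : ∀ z ∈ (univ : Finset (Fin n → Bool)).filter (fun z => wt z ≤ m),
      (univ.filter (fun i => z i = true) : Finset (Fin n)) ∈ T := by
    intro z hz
    simp only [Finset.mem_filter, Finset.mem_univ, true_and] at hz
    simp only [hT, Finset.mem_biUnion, Finset.mem_range]
    exact ⟨wt z, by omega, by
      rw [Finset.mem_powersetCard]
      exact ⟨Finset.subset_univ _, rfl⟩⟩
  have hinj : Set.InjOn (fun z : Fin n → Bool => (univ.filter (fun i => z i = true) : Finset (Fin n)))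
      ((univ : Finset (Fin n → Bool)).filter (fun z => wt z ≤ m)) := by
    intro z1 _ z2 _ heq
    funext i
    have heqs : (univ.filter (fun i => z1 i = true) : Finset (Fin n))
        = (univ.filter (fun i => z2 i = true) : Finset (Fin n)) := heq
    have h1 : i ∈ (univ.filter (fun i => z1 i = true) : Finset (Fin n))
        ↔ i ∈ (univ.filter (fun i => z2 i = true) : Finset (Fin n)) := by rw [heqs]
    simp only [Finset.mem_filter, Finset.mem_univ, true_and] at h1
    cases hz1 : z1 i <;> cases hz2 : z2 i <;> simp_all
  calc ((univ : Finset (Fin n → Bool)).filter (fun z => wt z ≤ m)).card ≤ T.card :=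
        Finset.card_le_card_of_injOn _ hmaps hinj
  _ ≤ ∑ t ∈ Finset.range (m+1), (Finset.univ.powersetCard t : Finset (Finset (Fin n))).card :=
        Finset.card_biUnion_le
  _ = ∑ t ∈ Finset.range (m+1), Nat.choose n t := by
        refine Finset.sum_congr rfl (fun t _ => ?_)
        rw [Finset.card_powersetCard]
        simp

lemma card_pairs_le (m : ℕ) :
    ((univ : Finset ((Fin n → Bool) × (Fin n → Bool))).filter
        (fun p => wt (xorv p.1 p.2) ≤ m)).card
      ≤ 2^n * ∑ t ∈ Finset.range (m+1), Nat.choose n t := by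
  classical
  have hmaps : ∀ p ∈ (univ : Finset ((Fin n → Bool) × (Fin n → Bool))).filter
      (fun p => wt (xorv p.1 p.2) ≤ m),
      ((p.1, xorv p.1 p.2) : (Fin n → Bool) × (Fin n → Bool)) ∈
        (univ : Finset (Fin n → Bool)) ×ˢ
          ((univ : Finset (Fin n → Bool)).filter (fun z => wt z ≤ m)) := by
    intro p hp
    simp only [Finset.mem_filter, Finset.mem_univ, true_and] at hp ⊢
    rw [Finset.mem_product]
    simp only [Finset.mem_univ, Finset.mem_filter, true_and]
    exact hp
  have hinj : Set.InjOn (fun p : (Fin n → Bool) × (Fin n → Bool) => (p.1, xorv p.1 p.2))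
      ((univ : Finset ((Fin n → Bool) × (Fin n → Bool))).filter
        (fun p => wt (xorv p.1 p.2) ≤ m)) := by
    intro p1 _ p2 _ heq
    have heq' : ((p1.1, xorv p1.1 p1.2) : (Fin n → Bool) × (Fin n → Bool))
        = (p2.1, xorv p2.1 p2.2) := heq
    obtain ⟨h1, h2⟩ := Prod.mk.inj heq' 
    have h3 : p1.2 = p2.2 := by
      funext i
      have := congrFun h2 i
      have h4 := congrFun h1 i
      simp only [xorv] at this
      cases ha : p1.1 i <;> cases hb : p1.2 i <;> cases hc : p2.1 i <;> cases hd : p2.2 i <;>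
        simp_all
    exact Prod.ext h1 h3
  calc _ ≤ ((univ : Finset (Fin n → Bool)) ×ˢ
          ((univ : Finset (Fin n → Bool)).filter (fun z => wt z ≤ m))).card :=
        Finset.card_le_card_of_injOn _ hmaps hinj
  _ = 2^n * ((univ : Finset (Fin n → Bool)).filter (fun z => wt z ≤ m)).card := by
        rw [Finset.card_product]
        congr 1
        rw [Finset.card_univ]
        simp [Fintype.card_fun]
  _ ≤ _ := Nat.mul_le_mul_left _ (card_wt_le m)
end Comb

lemma binom_sum_le (n m : ℕ) (p : ℝ) (hp : 0 < p) (hple : p ≤ 1/2) (hmn : m ≤ n) :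
    (∑ t ∈ Finset.range (m+1), (Nat.choose n t : ℝ)) ≤ (p^m * (1-p)^(n-m))⁻¹ := by
  have h1p : 0 < 1 - p := by linarith
  have hw : 0 < p^m * (1-p)^(n-m) := by positivity
  have hkey : ∀ t, t ≤ m → p^m * (1-p)^(n-m) ≤ p^t * (1-p)^(n-t) := by
    intro t ht
    have h1 : p^m = p^t * p^(m-t) := by rw [← pow_add]; congr 1; omega
    have h2 : (1-p)^(n-t) = (1-p)^(m-t) * (1-p)^(n-m) := by
      rw [← pow_add]; congr 1; omega
    rw [h1, h2]
    have h3 : p^(m-t) ≤ (1-p)^(m-t) :=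
      pow_le_pow_left₀ hp.le (by linarith) _
    calc p^t * p^(m-t) * (1-p)^(n-m) ≤ p^t * (1-p)^(m-t) * (1-p)^(n-m) := by
          have := mul_le_mul_of_nonneg_left h3 (pow_nonneg hp.le t)
          exact mul_le_mul_of_nonneg_right this (pow_nonneg h1p.le _)
    _ = p^t * ((1-p)^(m-t) * (1-p)^(n-m)) := by ring
  have hsum : (∑ t ∈ Finset.range (m+1), (Nat.choose n t : ℝ)) * (p^m * (1-p)^(n-m))
      ≤ 1 := by
    rw [Finset.sum_mul]
    have h4 : ∀ t ∈ Finset.range (m+1),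
        (Nat.choose n t : ℝ) * (p^m * (1-p)^(n-m))
          ≤ p^t * (1-p)^(n-t) * (Nat.choose n t : ℝ) := by
      intro t ht
      rw [mul_comm]
      exact mul_le_mul_of_nonneg_right (hkey t (Nat.lt_succ_iff.mp (Finset.mem_range.mp ht)))
        (Nat.cast_nonneg _)
    refine (Finset.sum_le_sum h4).trans ?_
    have h5 : Finset.range (m+1) ⊆ Finset.range (n+1) :=
      Finset.range_subset_range.mpr (by omega)
    refine (Finset.sum_le_sum_of_subset_of_nonneg h5 (fun t _ _ => by positivity)).trans ?_
    have := add_pow p (1-p) n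
    have h6 : (1:ℝ) = ∑ t ∈ Finset.range (n+1), p^t * (1-p)^(n-t) * (Nat.choose n t : ℝ) := by
      calc (1:ℝ) = (p + (1-p))^n := by norm_num
      _ = _ := add_pow p (1-p) n
    rw [← h6]
  rw [inv_eq_one_div, le_div_iff₀ hw]
  exact hsum

lemma construction (K : Type) [Field K] (n m d : ℕ) (φ : ℕ → K)
    (hnd : n ≤ 2*d + 2 + m) :
    ∃ B : Matrix (Fin n → Bool) (Fin n → Bool) K,
      B.rank ≤ (n+1)^2 * ∑ j ∈ Finset.range (d+1), Nat.choose n j ∧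
      diffCount B (Matrix.of fun x y => φ (ip x y))
        ≤ 2^n * ∑ t ∈ Finset.range (m+1), Nat.choose n t := by
  classical
  obtain ⟨coeff, hcoeff⟩ := Classical.axiomOfChoice (fun L => interp_exists K d L φ)
  set B : Matrix (Fin n → Bool) (Fin n → Bool) K :=
    ∑ a ∈ Finset.range (n+1), ∑ b ∈ Finset.range (n+1), ∑ j ∈ Finset.range (d+1),
      ∑ S ∈ (Finset.univ : Finset (Fin n)).powersetCard j,
        Matrix.vecMulVec
          (fun x => if wt x = a then coeff (a + b - n) j *
              ∏ i ∈ S, (if x i then (1:K) else 0) else 0)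
          (fun y => if wt y = b then ∏ i ∈ S, (if y i then (1:K) else 0) else 0)
    with hB
  -- rank bound
  have hrank : B.rank ≤ (n+1)^2 * ∑ j ∈ Finset.range (d+1), Nat.choose n j := by
    rw [hB]
    refine (matrix_rank_sum_le _ _).trans ?_
    refine le_trans (Finset.sum_le_sum (fun a _ => (matrix_rank_sum_le _ _).trans
      (Finset.sum_le_sum (fun b _ => (matrix_rank_sum_le _ _).trans
        (Finset.sum_le_sum (fun j _ => (matrix_rank_sum_le _ _).trans
          (Finset.sum_le_sum (fun S _ => matrix_rank_vecMulVec_le _ _)))))))) ?_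
    have hcard : ∀ j : ℕ, ((Finset.univ : Finset (Fin n)).powersetCard j).card
        = Nat.choose n j := by
      intro j
      rw [Finset.card_powersetCard]
      simp
    refine le_of_eq ?_
    calc ∑ _a ∈ Finset.range (n+1), ∑ _b ∈ Finset.range (n+1), ∑ j ∈ Finset.range (d+1),
          ∑ _S ∈ (Finset.univ : Finset (Fin n)).powersetCard j, 1
        = ∑ _a ∈ Finset.range (n+1), ∑ _b ∈ Finset.range (n+1), ∑ j ∈ Finset.range (d+1),
            Nat.choose n j := by
          refine Finset.sum_congr rfl (fun a _ => Finset.sum_congr rfl (fun b _ =>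
            Finset.sum_congr rfl (fun j _ => ?_)))
          rw [Finset.sum_const, hcard j, smul_eq_mul, mul_one]
    _ = (n+1)^2 * ∑ j ∈ Finset.range (d+1), Nat.choose n j := by
          rw [Finset.sum_const, Finset.sum_const]
          simp [Finset.card_range]
          ring
  -- evaluation
  have heval : ∀ x y : Fin n → Bool,
      B x y = ∑ j ∈ Finset.range (d+1),
        coeff (wt x + wt y - n) j * (Nat.choose (ip x y) j : K) := by
    intro x y
    have hax : wt x ∈ Finset.range (n+1) := Finset.mem_range.mpr (by
      have := wt_le_n x; omega)
    have hay : wt y ∈ Finset.range (n+1) := Finset.mem_range.mpr (by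
      have := wt_le_n y; omega)
    rw [hB]
    rw [Matrix.sum_apply]
    rw [Finset.sum_eq_single (wt x)]
    rotate_left
    · intro a _ ha
      rw [Matrix.sum_apply]
      refine Finset.sum_eq_zero (fun b _ => ?_)
      rw [Matrix.sum_apply]
      refine Finset.sum_eq_zero (fun j _ => ?_)
      rw [Matrix.sum_apply]
      refine Finset.sum_eq_zero (fun S _ => ?_)
      rw [Matrix.vecMulVec_apply, if_neg (fun h : wt x = a => ha h.symm), zero_mul]
    · intro h; exact absurd hax h
    rw [Matrix.sum_apply]
    rw [Finset.sum_eq_single (wt y)]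
    rotate_left
    · intro b _ hb
      rw [Matrix.sum_apply]
      refine Finset.sum_eq_zero (fun j _ => ?_)
      rw [Matrix.sum_apply]
      refine Finset.sum_eq_zero (fun S _ => ?_)
      rw [Matrix.vecMulVec_apply,
        show (if wt y = b then (∏ i ∈ S, if y i = true then (1:K) else 0) else 0) = 0
          from if_neg (fun h : wt y = b => hb h.symm), mul_zero]
    · intro h; exact absurd hay h
    rw [Matrix.sum_apply]
    refine Finset.sum_congr rfl (fun j _ => ?_)
    rw [Matrix.sum_apply]
    have hterm : ∀ S ∈ (Finset.univ : Finset (Fin n)).powersetCard j,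
        (Matrix.vecMulVec
          (fun x' => if wt x' = wt x then coeff (wt x + wt y - n) j *
              ∏ i ∈ S, (if x' i then (1:K) else 0) else 0)
          (fun y' => if wt y' = wt y then ∏ i ∈ S, (if y' i then (1:K) else 0) else 0)) x y
        = coeff (wt x + wt y - n) j *
            (if S ⊆ Finset.univ.filter (fun i => x i ∧ y i) then (1:K) else 0) := by
      intro S _
      rw [Matrix.vecMulVec_apply, if_pos rfl, if_pos rfl]
      have hprod : (∏ i ∈ S, (if x i then (1:K) else 0)) *
          (∏ i ∈ S, (if y i then (1:K) else 0))
          = if S ⊆ Finset.univ.filter (fun i => x i ∧ y i) then (1:K) else 0 := by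
        rw [← Finset.prod_mul_distrib]
        by_cases hsub : S ⊆ Finset.univ.filter (fun i => x i ∧ y i)
        · rw [if_pos hsub]
          refine Finset.prod_eq_one (fun i hi => ?_)
          have := hsub hi
          simp only [Finset.mem_filter] at this
          rw [if_pos this.2.1, if_pos this.2.2, mul_one]
        · rw [if_neg hsub]
          obtain ⟨i, hiS, hiF⟩ := Finset.not_subset.mp hsub
          refine Finset.prod_eq_zero hiS ?_
          simp only [Finset.mem_filter, Finset.mem_univ, true_and] at hiF
          rcases Decidable.not_and_iff_or_not.mp hiF with h | h
          · rw [if_neg h, zero_mul]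
          · rw [if_neg h, mul_zero]
      rw [mul_assoc, hprod]
    rw [Finset.sum_congr rfl hterm, ← Finset.mul_sum]
    congr 1
    rw [Finset.sum_boole]
    have hfilter : ((Finset.univ : Finset (Fin n)).powersetCard j).filter
        (fun S => S ⊆ Finset.univ.filter (fun i => x i ∧ y i))
        = (Finset.univ.filter (fun i => x i ∧ y i)).powersetCard j := by
      ext S
      simp only [Finset.mem_filter, Finset.mem_powersetCard]
      constructor
      · rintro ⟨⟨_, hc⟩, hs⟩; exact ⟨hs, hc⟩
      · rintro ⟨hs, hc⟩; exact ⟨⟨Finset.subset_univ _, hc⟩, hs⟩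
    rw [hfilter, Finset.card_powersetCard]
    rfl
  -- correctness
  have hcorrect : ∀ x y : Fin n → Bool, ip x y ≤ (wt x + wt y - n) + d →
      B x y = φ (ip x y) := by
    intro x y hk
    obtain ⟨h1, h2⟩ := wt_add_wt x y
    have hL : wt x + wt y - n ≤ ip x y := by omega
    rw [heval x y]
    exact hcoeff (wt x + wt y - n) (ip x y) hL hk
  refine ⟨B, hrank, ?_⟩
  -- error count
  have hsubset : (univ : Finset ((Fin n → Bool) × (Fin n → Bool))).filter
        (fun p => B p.1 p.2 ≠ (Matrix.of fun x y => φ (ip x y)) p.1 p.2)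
      ⊆ (univ : Finset ((Fin n → Bool) × (Fin n → Bool))).filter
        (fun p => wt (xorv p.1 p.2) ≤ m) := by
    intro p hp
    simp only [Finset.mem_filter, Finset.mem_univ, true_and] at hp ⊢
    by_contra hw
    apply hp
    have hwm : ¬ (wt (xorv p.1 p.2) ≤ m) := hw
    obtain ⟨h1, h2⟩ := wt_add_wt p.1 p.2
    have hk : ip p.1 p.2 ≤ (wt p.1 + wt p.2 - n) + d := by omega
    rw [hcorrect p.1 p.2 hk]
    rfl
  have hdc : diffCount B (Matrix.of fun x y => φ (ip x y))
      = ((univ : Finset ((Fin n → Bool) × (Fin n → Bool))).filter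
        (fun p => B p.1 p.2 ≠ (Matrix.of fun x y => φ (ip x y)) p.1 p.2)).card := by
    rw [diffCount, Nat.card_eq_fintype_card, Fintype.card_subtype]
  rw [hdc]
  exact (Finset.card_le_card hsubset).trans (card_pairs_le m)

lemma fallback (K : Type) [Field K] (n : ℕ) (M : Matrix (Fin n → Bool) (Fin n → Bool) K) :
    ∃ B : Matrix (Fin n → Bool) (Fin n → Bool) K,
      B.rank ≤ 2^n - 1 ∧ diffCount B M ≤ 2^n := by
  classical
  set x₀ : Fin n → Bool := fun _ => false with hx₀
  set B : Matrix (Fin n → Bool) (Fin n → Bool) K :=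
    ∑ x ∈ (univ : Finset (Fin n → Bool)).erase x₀,
      Matrix.vecMulVec (fun x' => if x' = x then (1:K) else 0) (fun y => M x y) with hB
  refine ⟨B, ?_, ?_⟩
  · refine (matrix_rank_sum_le _ _).trans ?_
    refine le_trans (Finset.sum_le_sum (fun x _ => matrix_rank_vecMulVec_le _ _)) ?_
    rw [Finset.sum_const, smul_eq_mul, mul_one]
    rw [Finset.card_erase_of_mem (Finset.mem_univ _), Finset.card_univ]
    simp [Fintype.card_fun]
  · have heval : ∀ x y, x ≠ x₀ → B x y = M x y := by
      intro x y hx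
      rw [hB, Matrix.sum_apply]
      rw [Finset.sum_eq_single x]
      · rw [Matrix.vecMulVec_apply, if_pos rfl, one_mul]
      · intro x₁ _ hx₁
        rw [Matrix.vecMulVec_apply, if_neg (fun h => hx₁ h.symm), zero_mul]
      · intro h
        exact absurd (Finset.mem_erase.mpr ⟨hx, Finset.mem_univ _⟩) h
    have hdc : diffCount B M = ((univ : Finset ((Fin n → Bool) × (Fin n → Bool))).filter
        (fun p => B p.1 p.2 ≠ M p.1 p.2)).card := by
      rw [diffCount, Nat.card_eq_fintype_card, Fintype.card_subtype]
    rw [hdc]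
    have hsub : ((univ : Finset ((Fin n → Bool) × (Fin n → Bool))).filter
        (fun p => B p.1 p.2 ≠ M p.1 p.2))
        ⊆ (univ : Finset ((Fin n → Bool) × (Fin n → Bool))).filter (fun p => p.1 = x₀) := by
      intro p hp
      simp only [Finset.mem_filter, Finset.mem_univ, true_and] at hp ⊢
      by_contra h
      exact hp (heval p.1 p.2 h)
    refine (Finset.card_le_card hsub).trans ?_
    have hinj : Set.InjOn (fun p : (Fin n → Bool) × (Fin n → Bool) => p.2)
        ((univ : Finset ((Fin n → Bool) × (Fin n → Bool))).filter (fun p => p.1 = x₀)) := by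
      intro p1 h1 p2 h2 heq
      simp only [Finset.coe_filter, Set.mem_setOf_eq] at h1 h2
      exact Prod.ext (h1.2.trans h2.2.symm) heq
    calc _ ≤ (univ : Finset (Fin n → Bool)).card :=
          Finset.card_le_card_of_injOn _ (fun p _ => Finset.mem_univ _) hinj
    _ = 2^n := by rw [Finset.card_univ]; simp [Fintype.card_fun]

lemma error_numeric (ε : ℝ) (hε0 : 0 < ε) (hε1 : ε < 1/10) (n : ℕ) :
    (2:ℝ)^n * ∑ t ∈ Finset.range (Nat.floor (ε^3 * n) + 1), (Nat.choose n t : ℝ)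
      ≤ (2:ℝ) ^ ((1+ε) * n) := by
  set θ : ℝ := ε^3 with hθdef
  have hθ0 : 0 < θ := by positivity
  have hθ1 : θ ≤ 1/1000 := by
    rw [hθdef]
    nlinarith [sq_nonneg ε, mul_pos hε0 hε0, mul_pos (mul_pos hε0 hε0) hε0]
  set m : ℕ := Nat.floor (θ * n) with hm
  have hmθ : (m:ℝ) ≤ θ * n := Nat.floor_le (by positivity)
  have hmn : m ≤ n := by
    have h2 : θ * n ≤ (n:ℝ) := by nlinarith [Nat.cast_nonneg (α := ℝ) n]
    exact_mod_cast Nat.cast_le.mp ((hmθ.trans h2))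
  have hsum := binom_sum_le n m θ hθ0 (by linarith) hmn
  -- express things with exp
  have h1θ : (0:ℝ) < 1 - θ := by linarith
  have hinv : (θ^m * (1-θ)^(n-m))⁻¹
      = Real.exp (-((m:ℝ) * Real.log θ + ((n:ℝ)-(m:ℝ)) * Real.log (1-θ))) := by
    have hp1 : (0:ℝ) < θ^m * (1-θ)^(n-m) := by positivity
    rw [Real.exp_neg]
    congr 1
    rw [← Real.exp_log hp1]
    congr 1
    rw [Real.log_mul (by positivity) (by positivity), Real.log_pow θ m,
      Real.log_pow (1-θ) (n-m), Nat.cast_sub hmn]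
  -- scalar inequality
  have hlogθ : Real.log θ = 3 * Real.log ε := by
    rw [hθdef, Real.log_pow]; push_cast; ring
  have hlogε : -Real.log ε ≤ 1/ε := by
    have h := Real.log_le_sub_one_of_pos (show (0:ℝ) < ε⁻¹ by positivity)
    rw [Real.log_inv] at h
    have : (0:ℝ) < ε := hε0
    rw [inv_eq_one_div] at h
    linarith
  have hlogε0 : Real.log ε ≤ 0 := Real.log_nonpos hε0.le (by linarith)
  have hlog1θ : -Real.log (1-θ) ≤ 2*θ := by
    have h := Real.log_le_sub_one_of_pos (show (0:ℝ) < (1-θ)⁻¹ by positivity)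
    rw [Real.log_inv] at h
    have h2 : (1-θ)⁻¹ - 1 = θ / (1-θ) := by field_simp; ring
    rw [h2] at h
    have h3 : θ / (1-θ) ≤ 2*θ := by
      rw [div_le_iff₀ h1θ]
      nlinarith
    linarith
  have hn0 : (0:ℝ) ≤ (n:ℝ) := Nat.cast_nonneg n
  have hscalar : -((m:ℝ) * Real.log θ + ((n:ℝ)-(m:ℝ)) * Real.log (1-θ))
      ≤ ε * n * Real.log 2 := by
    have hm0 : (0:ℝ) ≤ (m:ℝ) := Nat.cast_nonneg m
    have hnm0 : (0:ℝ) ≤ (n:ℝ) - (m:ℝ) := by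
      have : (m:ℝ) ≤ (n:ℝ) := Nat.cast_le.mpr hmn
      linarith
    have t1 : -((m:ℝ) * Real.log θ) ≤ 3 * ε^2 * n := by
      rw [hlogθ]
      have h4 : -((m:ℝ) * (3 * Real.log ε)) = (m:ℝ) * (3 * (-Real.log ε)) := by ring
      rw [h4]
      have h5 : (m:ℝ) * (3 * (-Real.log ε)) ≤ (θ*n) * (3 * (1/ε)) := by
        apply mul_le_mul hmθ (by linarith) (by linarith) (by positivity)
      calc (m:ℝ) * (3 * (-Real.log ε)) ≤ (θ*n) * (3 * (1/ε)) := h5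
      _ = 3 * ε^2 * n := by rw [hθdef]; field_simp
    have t2 : -(((n:ℝ)-(m:ℝ)) * Real.log (1-θ)) ≤ 2*θ*n := by
      have h6 : -(((n:ℝ)-(m:ℝ)) * Real.log (1-θ)) = ((n:ℝ)-(m:ℝ)) * (-Real.log (1-θ)) := by
        ring
      rw [h6]
      have hlog1θ0 : 0 ≤ -Real.log (1-θ) := by
        have := Real.log_nonpos (by linarith) (by linarith : 1-θ ≤ 1)
        linarith
      calc ((n:ℝ)-(m:ℝ)) * (-Real.log (1-θ)) ≤ (n:ℝ) * (2*θ) := by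
            apply mul_le_mul (by linarith) hlog1θ hlog1θ0 hn0
      _ = 2*θ*n := by ring
    have hlog2 : (0.6931471803:ℝ) < Real.log 2 := Real.log_two_gt_d9
    have hεsq : 3 * ε^2 * n + 2*θ*n ≤ ε * n * 0.6931471803 := by
      rw [hθdef]
      have key : 3*ε + 2*ε^2 ≤ 0.39 := by nlinarith [sq_nonneg ε]
      have hkey2 := mul_le_mul_of_nonneg_right key (mul_nonneg hε0.le hn0)
      nlinarith [hkey2]
    have : ε * n * 0.6931471803 ≤ ε * n * Real.log 2 := by
      apply mul_le_mul_of_nonneg_left hlog2.le (by positivity)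
    linarith
  -- put together
  have hrpow : (2:ℝ) ^ ((1+ε) * n) = (2:ℝ)^n * (2:ℝ)^(ε * (n:ℝ)) := by
    rw [show (1+ε) * (n:ℝ) = (n:ℝ) + ε * n by ring,
      Real.rpow_add (by norm_num), Real.rpow_natCast]
  rw [hrpow]
  apply mul_le_mul_of_nonneg_left _ (by positivity)
  refine hsum.trans ?_
  rw [hinv]
  have h2exp : (2:ℝ)^(ε * (n:ℝ)) = Real.exp (ε * n * Real.log 2) := by
    rw [Real.rpow_def_of_pos (by norm_num)]
    ring_nf
  rw [h2exp]
  exact Real.exp_le_exp.mpr hscalar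

set_option maxHeartbeats 2000000 in
lemma rank_numeric (ε : ℝ) (hε0 : 0 < ε) (hε1 : ε < 1/10) (n : ℕ)
    (hN2 : 2 ≤ n) (hbig : (1568:ℝ) / (ε^3)^4 ≤ (n:ℝ)) :
    ((n:ℝ)+1)^2 * ∑ j ∈ Finset.range ((n - Nat.floor (ε^3 * n))/2 + 1 + 1), (Nat.choose n j : ℝ)
      ≤ (2:ℝ) ^ ((1 - (ε^3)^2/100) * (n:ℝ)) := by
  set θ : ℝ := ε^3 with hθdef
  have hθ0 : 0 < θ := by positivity
  have hθ1 : θ ≤ 1/1000 := by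
    rw [hθdef]
    nlinarith [sq_nonneg ε, mul_pos hε0 hε0, mul_pos (mul_pos hε0 hε0) hε0]
  set τ : ℝ := θ/8 with hτdef
  have hτ0 : 0 < τ := by positivity
  have hτ1 : τ ≤ 1/8000 := by rw [hτdef]; linarith
  set p : ℝ := 1/2 - τ with hpdef
  have hp0 : 0 < p := by rw [hpdef]; linarith
  have hp12 : p ≤ 1/2 := by rw [hpdef]; linarith
  set m : ℕ := Nat.floor (θ * n) with hm
  have hmθ : (m:ℝ) ≤ θ * n := Nat.floor_le (by positivity)
  have hmlow : θ * n - 1 ≤ (m:ℝ) := by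
    have := Nat.lt_floor_add_one (θ * (n:ℝ))
    push_cast at this ⊢
    linarith
  have hmn : m ≤ n := by
    have h2 : θ * n ≤ (n:ℝ) := by nlinarith [Nat.cast_nonneg (α := ℝ) n]
    exact_mod_cast Nat.cast_le.mp (hmθ.trans h2)
  set d : ℕ := (n - m)/2 + 1 with hd
  have hdn : d ≤ n := by
    have : (n - m)/2 ≤ n/2 := Nat.div_le_div_right (Nat.sub_le _ _)
    have h2 : n/2 + 1 ≤ n := by omega
    omega
  have hdup : (d:ℝ) ≤ ((n:ℝ) - (m:ℝ))/2 + 1 := by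
    have h1 : (((n - m)/2 : ℕ) : ℝ) ≤ ((n - m : ℕ) : ℝ)/2 := Nat.cast_div_le
    have h2 : ((n - m : ℕ) : ℝ) = (n:ℝ) - (m:ℝ) := by rw [Nat.cast_sub hmn]
    rw [hd]
    push_cast
    rw [h2] at h1
    linarith
  have hdr0 : (0:ℝ) ≤ (d:ℝ) := Nat.cast_nonneg d
  have hndr : (d:ℝ) ≤ (n:ℝ) := Nat.cast_le.mpr hdn
  have hn0 : (0:ℝ) ≤ (n:ℝ) := Nat.cast_nonneg n
  have hsum := binom_sum_le n d p hp0 hp12 hdn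
  -- exp form
  have h1p : (0:ℝ) < 1 - p := by rw [hpdef]; linarith
  have hinv : (p^d * (1-p)^(n-d))⁻¹
      = Real.exp (-((d:ℝ) * Real.log p + ((n:ℝ)-(d:ℝ)) * Real.log (1-p))) := by
    have hp1 : (0:ℝ) < p^d * (1-p)^(n-d) := by positivity
    rw [Real.exp_neg]
    congr 1
    rw [← Real.exp_log hp1]
    congr 1
    rw [Real.log_mul (by positivity) (by positivity), Real.log_pow p d,
      Real.log_pow (1-p) (n-d), Nat.cast_sub hdn]
  -- log identities
  have h2τ : (0:ℝ) < 1 - 2*τ := by linarith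
  have hlogp : Real.log p = Real.log (1 - 2*τ) - Real.log 2 := by
    rw [show p = (1 - 2*τ)/2 by rw [hpdef]; ring, Real.log_div (by linarith) (by norm_num)]
  have hlog1p : Real.log (1-p) = Real.log (1 + 2*τ) - Real.log 2 := by
    rw [show 1 - p = (1 + 2*τ)/2 by rw [hpdef]; ring,
      Real.log_div (by linarith) (by norm_num)]
  have hA1 : -Real.log (1 - 2*τ) ≤ 2*τ + 5*τ^2 := by
    have h := Real.log_le_sub_one_of_pos (show (0:ℝ) < (1-2*τ)⁻¹ by positivity)
    rw [Real.log_inv] at h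
    have h2 : (1-2*τ)⁻¹ - 1 = 2*τ / (1-2*τ) := by field_simp; ring
    rw [h2] at h
    have h3 : 2*τ / (1-2*τ) ≤ 2*τ + 5*τ^2 := by
      rw [div_le_iff₀ h2τ]
      nlinarith [sq_nonneg τ, mul_pos hτ0 hτ0]
    linarith
  have hA2 : 2*τ - 4*τ^2 ≤ Real.log (1 + 2*τ) := by
    have h := Real.log_le_sub_one_of_pos (show (0:ℝ) < (1+2*τ)⁻¹ by positivity)
    rw [Real.log_inv] at h
    have h2 : (1+2*τ)⁻¹ - 1 = -(2*τ / (1+2*τ)) := by field_simp; ring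
    rw [h2] at h
    have h3 : 2*τ*(1-2*τ) ≤ 2*τ / (1+2*τ) := by
      rw [le_div_iff₀ (by linarith : (0:ℝ) < 1+2*τ)]
      nlinarith [mul_pos hτ0 hτ0, mul_pos (mul_pos hτ0 hτ0) hτ0]
    nlinarith
  have hlog1m2 : Real.log (1-2*τ) ≤ 0 := Real.log_nonpos (by linarith) (by linarith)
  have hlog1p2 : 0 ≤ Real.log (1+2*τ) := by nlinarith
  -- the A bound
  have hAbound : -((d:ℝ) * Real.log (1-2*τ)) - ((n:ℝ)-(d:ℝ)) * Real.log (1+2*τ)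
      ≤ (3/4)*θ - (11/64)*θ^2*(n:ℝ) := by
    have t1 : -((d:ℝ) * Real.log (1-2*τ)) ≤ (d:ℝ) * (2*τ + 5*τ^2) := by
      have := mul_le_mul_of_nonneg_left hA1 hdr0
      linarith
    have t2 : -(((n:ℝ)-(d:ℝ)) * Real.log (1+2*τ)) ≤ -(((n:ℝ)-(d:ℝ)) * (2*τ - 4*τ^2)) := by
      have := mul_le_mul_of_nonneg_left hA2 (by linarith : (0:ℝ) ≤ (n:ℝ)-(d:ℝ))
      linarith
    have h2dn : 2*(d:ℝ) - (n:ℝ) ≤ 3 - θ*(n:ℝ) := by linarith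
    -- d(2τ+5τ²) - (n-d)(2τ-4τ²) = 2τ(2d-n) + 5τ²d + 4τ²(n-d)
    have expand : (d:ℝ) * (2*τ + 5*τ^2) - (((n:ℝ)-(d:ℝ)) * (2*τ - 4*τ^2))
        = 2*τ*(2*(d:ℝ) - (n:ℝ)) + 5*τ^2*(d:ℝ) + 4*τ^2*((n:ℝ)-(d:ℝ)) := by ring
    have bound2 : 2*τ*(2*(d:ℝ) - (n:ℝ)) ≤ 2*τ*(3 - θ*(n:ℝ)) :=
      mul_le_mul_of_nonneg_left h2dn (by linarith)
    have bound3 : 5*τ^2*(d:ℝ) + 4*τ^2*((n:ℝ)-(d:ℝ)) ≤ 5*τ^2*(n:ℝ) := by nlinarith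
    have final : 2*τ*(3 - θ*(n:ℝ)) + 5*τ^2*(n:ℝ) = (3/4)*θ - (1/4)*θ^2*(n:ℝ) + (5/64)*θ^2*(n:ℝ) := by
      rw [hτdef]; ring
    nlinarith
  -- hN: 2 log(n+1) ≤ (θ²/7) n - 4
  have hsqrtpos : (0:ℝ) < Real.sqrt ((n:ℝ)+1) := Real.sqrt_pos.mpr (by linarith)
  have hstep1 : 4 * Real.sqrt ((n:ℝ)+1) ≤ (θ^2/7)*(n:ℝ) := by
    have h16 : 16*((n:ℝ)+1) ≤ ((θ^2/7)*(n:ℝ))^2 := by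
      have hn1 : (1:ℝ) ≤ (n:ℝ) := by exact_mod_cast Nat.one_le_cast.mpr (by omega)
      have hb : (1568:ℝ) ≤ θ^4 * (n:ℝ) := by
        rw [div_le_iff₀ (by positivity : (0:ℝ) < θ^4)] at hbig
        linarith [hbig]
      -- 16(n+1) ≤ 32 n ≤ (θ⁴/49) n²
      have h32 : 16*((n:ℝ)+1) ≤ 32*(n:ℝ) := by linarith
      have h49 : 32*(n:ℝ) ≤ (θ^4/49) * (n:ℝ)^2 := by
        have := mul_le_mul_of_nonneg_right hb hn0
        nlinarith
      calc 16*((n:ℝ)+1) ≤ 32*(n:ℝ) := h32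
      _ ≤ (θ^4/49) * (n:ℝ)^2 := h49
      _ = ((θ^2/7)*(n:ℝ))^2 := by ring
    have := Real.sqrt_le_sqrt h16
    rw [Real.sqrt_sq (by positivity : (0:ℝ) ≤ (θ^2/7)*(n:ℝ))] at this
    have h4s : Real.sqrt (16:ℝ) = 4 := by
      rw [show (16:ℝ) = 4^2 by norm_num, Real.sqrt_sq (by norm_num : (0:ℝ) ≤ 4)]
    calc 4 * Real.sqrt ((n:ℝ)+1) = Real.sqrt (16*((n:ℝ)+1)) := by
          rw [Real.sqrt_mul (by norm_num : (0:ℝ) ≤ 16) _, h4s]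
    _ ≤ (θ^2/7)*(n:ℝ) := this
  have hlogn : 2 * Real.log ((n:ℝ)+1) ≤ (θ^2/7)*(n:ℝ) - 4 := by
    have h1 : Real.log ((n:ℝ)+1) = 2 * Real.log (Real.sqrt ((n:ℝ)+1)) := by
      rw [Real.log_sqrt (by linarith)]
      ring
    have h2 : Real.log (Real.sqrt ((n:ℝ)+1)) ≤ Real.sqrt ((n:ℝ)+1) - 1 :=
      Real.log_le_sub_one_of_pos hsqrtpos
    rw [h1]
    linarith
  -- combine
  have hlog2u : Real.log 2 < 0.6931471808 := Real.log_two_lt_d9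
  have hlog2l : (0.6931471803:ℝ) < Real.log 2 := Real.log_two_gt_d9
  have hscalar : 2 * Real.log ((n:ℝ)+1)
      + (-((d:ℝ) * Real.log p + ((n:ℝ)-(d:ℝ)) * Real.log (1-p)))
      ≤ (1 - θ^2/100) * (n:ℝ) * Real.log 2 := by
    have hexpand : -((d:ℝ) * Real.log p + ((n:ℝ)-(d:ℝ)) * Real.log (1-p))
        = (n:ℝ) * Real.log 2
          + (-((d:ℝ) * Real.log (1-2*τ)) - ((n:ℝ)-(d:ℝ)) * Real.log (1+2*τ)) := by
      rw [hlogp, hlog1p]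
      ring
    rw [hexpand]
    have hθ2n : 0 ≤ θ^2*(n:ℝ) := by positivity
    nlinarith [hAbound, hlogn, hθ2n]
  -- final put-together
  have hnp1 : ((n:ℝ)+1)^2 = Real.exp (2 * Real.log ((n:ℝ)+1)) := by
    rw [show (2:ℝ) * Real.log ((n:ℝ)+1) = Real.log (((n:ℝ)+1)^2) by
      rw [Real.log_pow]; push_cast; ring]
    rw [Real.exp_log (by positivity)]
  have hrpow : (2:ℝ) ^ ((1 - θ^2/100) * (n:ℝ))
      = Real.exp ((1 - θ^2/100) * (n:ℝ) * Real.log 2) := by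
    rw [Real.rpow_def_of_pos (by norm_num)]
    ring_nf
  calc ((n:ℝ)+1)^2 * ∑ j ∈ Finset.range (d + 1), (Nat.choose n j : ℝ)
      ≤ ((n:ℝ)+1)^2 * (p^d * (1-p)^(n-d))⁻¹ := by
        apply mul_le_mul_of_nonneg_left hsum (by positivity)
  _ = Real.exp (2 * Real.log ((n:ℝ)+1)
        + (-((d:ℝ) * Real.log p + ((n:ℝ)-(d:ℝ)) * Real.log (1-p)))) := by
        rw [hinv, hnp1, ← Real.exp_add]
  _ ≤ Real.exp ((1 - θ^2/100) * (n:ℝ) * Real.log 2) := Real.exp_le_exp.mpr hscalar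
  _ = (2:ℝ) ^ ((1 - θ^2/100) * (n:ℝ)) := hrpow.symm

lemma small_chain (N n : ℕ) (hn : n ≤ N) :
    ((2^n - 1 : ℕ) : ℝ) ≤ (2:ℝ) ^ ((1 - (2:ℝ)^(-(N:ℝ))/((N:ℝ)+1)) * (n:ℝ)) := by
  set γ : ℝ := (2:ℝ)^(-(N:ℝ))/((N:ℝ)+1) with hγ
  have hN0 : (0:ℝ) ≤ (N:ℝ) := Nat.cast_nonneg N
  have hγ0 : 0 < γ := by
    rw [hγ]
    have : (0:ℝ) < (2:ℝ)^(-(N:ℝ)) := Real.rpow_pos_of_pos (by norm_num) _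
    positivity
  have hcast : ((2^n - 1 : ℕ) : ℝ) = (2:ℝ)^n - 1 := by
    rw [Nat.cast_sub (Nat.one_le_two_pow)]
    push_cast
    ring
  rw [hcast]
  have hlog2 : Real.log 2 < 1 := by
    have := Real.log_two_lt_d9
    linarith
  have hlog2p : 0 < Real.log 2 := Real.log_pos (by norm_num)
  have h1 : (2:ℝ)^((1-γ) * (n:ℝ)) = (2:ℝ)^(n:ℝ) * Real.exp (-(γ*(n:ℝ)*Real.log 2)) := by
    rw [show (1-γ) * (n:ℝ) = (n:ℝ) + (-(γ*(n:ℝ))) by ring,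
      Real.rpow_add (by norm_num)]
    congr 1
    rw [Real.rpow_def_of_pos (by norm_num)]
    ring_nf
  have h2 : 1 - γ*(n:ℝ)*Real.log 2 ≤ Real.exp (-(γ*(n:ℝ)*Real.log 2)) := by
    have := Real.add_one_le_exp (-(γ*(n:ℝ)*Real.log 2))
    linarith
  have hnN : (n:ℝ) ≤ (N:ℝ) := Nat.cast_le.mpr hn
  have h3 : γ*(n:ℝ)*Real.log 2 ≤ (2:ℝ)^(-(N:ℝ)) := by
    rw [hγ]
    have hnlog : (n:ℝ) * Real.log 2 ≤ (N:ℝ)+1 := by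
      have h5 : (n:ℝ) * Real.log 2 ≤ (N:ℝ) * 1 := by
        apply mul_le_mul hnN hlog2.le hlog2p.le hN0
      linarith
    have hpow : (0:ℝ) < (2:ℝ)^(-(N:ℝ)) := Real.rpow_pos_of_pos (by norm_num) _
    rw [div_mul_eq_mul_div, div_mul_eq_mul_div, div_le_iff₀ (by linarith : (0:ℝ) < (N:ℝ)+1)]
    calc (2:ℝ)^(-(N:ℝ)) * (n:ℝ) * Real.log 2 = ((n:ℝ) * Real.log 2) * (2:ℝ)^(-(N:ℝ)) := by ring
    _ ≤ ((N:ℝ)+1) * (2:ℝ)^(-(N:ℝ)) := mul_le_mul_of_nonneg_right hnlog hpow.le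
    _ = (2:ℝ)^(-(N:ℝ)) * ((N:ℝ)+1) := by ring
  have h4 : (2:ℝ)^(n:ℝ) * (2:ℝ)^(-(N:ℝ)) ≤ 1 := by
    rw [← Real.rpow_add (by norm_num)]
    exact Real.rpow_le_one_of_one_le_of_nonpos (by norm_num) (by linarith)
  have h2n0 : (0:ℝ) < (2:ℝ)^(n:ℝ) := Real.rpow_pos_of_pos (by norm_num) _
  have hnat : (2:ℝ)^(n:ℝ) = (2:ℝ)^n := Real.rpow_natCast 2 n
  rw [← hnat]
  calc (2:ℝ)^(n:ℝ) - 1 ≤ (2:ℝ)^(n:ℝ) * (1 - γ*(n:ℝ)*Real.log 2) := by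
        have h5 := mul_le_mul_of_nonneg_left h3 h2n0.le
        have h6 : (2:ℝ)^(n:ℝ) * (γ*(n:ℝ)*Real.log 2) ≤ 1 := le_trans h5 h4
        have h7 : (2:ℝ)^(n:ℝ) * (1 - γ*(n:ℝ)*Real.log 2)
            = (2:ℝ)^(n:ℝ) - (2:ℝ)^(n:ℝ) * (γ*(n:ℝ)*Real.log 2) := by ring
        rw [h7]
        linarith [h6]
  _ ≤ (2:ℝ)^(n:ℝ) * Real.exp (-(γ*(n:ℝ)*Real.log 2)) := by
      exact mul_le_mul_of_nonneg_left h2 (le_of_lt h2n0)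
  _ = (2:ℝ)^((1-γ) * (n:ℝ)) := h1.symm

lemma claim (ε : ℝ) (hε0 : 0 < ε) (hε1 : ε < 1/10) :
    ∃ δ : ℝ, 0 < δ ∧ δ < 1 ∧
      ∀ (K : Type) [Field K], ∀ n : ℕ, ∀ φ : ℕ → K,
        ∃ B : Matrix (Fin n → Bool) (Fin n → Bool) K,
          (B.rank : ℝ) ≤ 2 ^ (δ * n) ∧
          (diffCount B (Matrix.of fun x y => φ (ip x y)) : ℝ) ≤ 2 ^ ((1 + ε) * n) := by
  classical
  set θ : ℝ := ε^3 with hθdef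
  have hθ0 : 0 < θ := by positivity
  have hθ1 : θ ≤ 1/1000 := by
    rw [hθdef]
    nlinarith [sq_nonneg ε, mul_pos hε0 hε0, mul_pos (mul_pos hε0 hε0) hε0]
  set N : ℕ := max 2 (Nat.ceil ((1568:ℝ)/θ^4)) with hN
  set δ₁ : ℝ := 1 - θ^2/100 with hδ₁
  set δ₂ : ℝ := 1 - (2:ℝ)^(-(N:ℝ))/((N:ℝ)+1) with hδ₂
  have hδ₁01 : 0 < δ₁ ∧ δ₁ < 1 := by
    constructor
    · rw [hδ₁]; nlinarith
    · rw [hδ₁]; nlinarith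
  have hδ₂01 : 0 < δ₂ ∧ δ₂ < 1 := by
    have hp : (0:ℝ) < (2:ℝ)^(-(N:ℝ)) := Real.rpow_pos_of_pos (by norm_num) _
    have hp1 : (2:ℝ)^(-(N:ℝ)) ≤ 1 :=
      Real.rpow_le_one_of_one_le_of_nonpos (by norm_num) (by simp [Nat.cast_nonneg])
    have hN1 : (1:ℝ) ≤ (N:ℝ)+1 := by
      have : (0:ℝ) ≤ (N:ℝ) := Nat.cast_nonneg N
      linarith
    constructor
    · rw [hδ₂]
      have : (2:ℝ)^(-(N:ℝ))/((N:ℝ)+1) ≤ 1 := by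
        rw [div_le_one (by linarith)]
        linarith
      have h2 : (2:ℝ)^(-(N:ℝ))/((N:ℝ)+1) < 1 := by
        rw [div_lt_one (by linarith)]
        have hN2' : (2:ℕ) ≤ N := le_max_left _ _
        have : (2:ℝ) ≤ (N:ℝ) := by exact_mod_cast hN2'
        linarith
      linarith
    · rw [hδ₂]
      have : 0 < (2:ℝ)^(-(N:ℝ))/((N:ℝ)+1) := by positivity
      linarith
  refine ⟨max δ₁ δ₂, lt_max_of_lt_left hδ₁01.1, max_lt hδ₁01.2 hδ₂01.2, ?_⟩
  intro K _ n φ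
  set δ : ℝ := max δ₁ δ₂ with hδ
  by_cases hcase : n < N
  · -- fallback
    obtain ⟨B, hrank, hdiff⟩ := fallback K n (Matrix.of fun x y => φ (ip x y))
    refine ⟨B, ?_, ?_⟩
    · calc (B.rank : ℝ) ≤ ((2^n - 1 : ℕ) : ℝ) := Nat.cast_le.mpr hrank
      _ ≤ (2:ℝ) ^ (δ₂ * n) := by
          have := small_chain N n hcase.le
          rw [hδ₂]
          exact this
      _ ≤ (2:ℝ) ^ (δ * n) := by
          apply Real.rpow_le_rpow_of_exponent_le (by norm_num)
          apply mul_le_mul_of_nonneg_right (le_max_right _ _) (Nat.cast_nonneg n)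
    · calc (diffCount B (Matrix.of fun x y => φ (ip x y)) : ℝ) ≤ ((2^n : ℕ) : ℝ) :=
            Nat.cast_le.mpr hdiff
      _ = (2:ℝ) ^ ((n:ℝ)) := by rw [Real.rpow_natCast]; push_cast; ring
      _ ≤ (2:ℝ) ^ ((1+ε) * n) := by
          apply Real.rpow_le_rpow_of_exponent_le (by norm_num)
          nlinarith [Nat.cast_nonneg (α := ℝ) n, hε0]
  · -- main construction
    push_neg at hcase
    have hN2 : 2 ≤ n := le_trans (le_max_left 2 _) hcase
    set m : ℕ := Nat.floor (θ * n) with hm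
    have hmθ : (m:ℝ) ≤ θ * n := Nat.floor_le (by positivity)
    have hmn : m ≤ n := by
      have h2 : θ * n ≤ (n:ℝ) := by nlinarith [Nat.cast_nonneg (α := ℝ) n]
      exact_mod_cast Nat.cast_le.mp (hmθ.trans h2)
    set d : ℕ := (n - m)/2 + 1 with hd
    have hnd : n ≤ 2*d + 2 + m := by omega
    obtain ⟨B, hrank, hdiff⟩ := construction K n m d φ hnd
    have hbig : (1568:ℝ) / θ^4 ≤ (n:ℝ) := by
      have h1 : (1568:ℝ)/θ^4 ≤ (Nat.ceil ((1568:ℝ)/θ^4) : ℝ) := Nat.le_ceil _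
      have h2 : (Nat.ceil ((1568:ℝ)/θ^4) : ℕ) ≤ N := le_max_right _ _
      have h3 : ((Nat.ceil ((1568:ℝ)/θ^4) : ℕ) : ℝ) ≤ (N:ℝ) := Nat.cast_le.mpr h2
      have h4 : ((N:ℕ):ℝ) ≤ (n:ℝ) := Nat.cast_le.mpr hcase
      linarith
    refine ⟨B, ?_, ?_⟩
    · calc (B.rank : ℝ) ≤ (((n+1)^2 * ∑ j ∈ Finset.range (d+1), Nat.choose n j : ℕ) : ℝ) :=
            Nat.cast_le.mpr hrank
      _ = ((n:ℝ)+1)^2 * ∑ j ∈ Finset.range (d+1), (Nat.choose n j : ℝ) := by push_cast; ring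
      _ ≤ (2:ℝ) ^ ((1 - θ^2/100) * (n:ℝ)) := by
          have := rank_numeric ε hε0 hε1 n hN2 (by rw [← hθdef]; exact hbig)
          rw [← hθdef] at this
          exact this
      _ ≤ (2:ℝ) ^ (δ * n) := by
          apply Real.rpow_le_rpow_of_exponent_le (by norm_num)
          apply mul_le_mul_of_nonneg_right _ (Nat.cast_nonneg n)
          rw [← hδ₁]
          exact le_max_left _ _
    · calc (diffCount B (Matrix.of fun x y => φ (ip x y)) : ℝ)
          ≤ ((2^n * ∑ t ∈ Finset.range (m+1), Nat.choose n t : ℕ) : ℝ) :=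
            Nat.cast_le.mpr hdiff
      _ = (2:ℝ)^n * ∑ t ∈ Finset.range (m+1), (Nat.choose n t : ℝ) := by push_cast; ring
      _ ≤ (2:ℝ) ^ ((1+ε) * n) := by
          have := error_numeric ε hε0 hε1 n
          rw [← hθdef] at this
          exact this

/-- Non-rigidity of truth table matrices of inner-product-type functions of
    symmetric functions (SYM of ANDs of paired variables). -/
theorem sym_ip_not_rigid :
    ∃ ε₀ : ℝ, 0 < ε₀ ∧
      ∃ δ : ℝ → ℝ,
        (∀ ε : ℝ, 0 < ε → ε < ε₀ → 0 < δ ε ∧ δ ε < 1) ∧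
        ∀ ε : ℝ, 0 < ε → ε < ε₀ →
          ∀ (K : Type) [Field K], ∀ n : ℕ, ∀ φ : ℕ → K,
            ∃ B : Matrix (Fin n → Bool) (Fin n → Bool) K,
              (B.rank : ℝ) ≤ 2 ^ (δ ε * n) ∧
              (diffCount B (Matrix.of fun x y => φ (ip x y)) : ℝ) ≤
                2 ^ ((1 + ε) * n) := by
  refine ⟨1/10, by norm_num,
    fun ε => if h : 0 < ε ∧ ε < 1/10 then Classical.choose (claim ε h.1 h.2) else 1/2,
    ?_, ?_⟩
  · intro ε h0 h1
    dsimp only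
    rw [dif_pos (show 0 < ε ∧ ε < 1/10 from ⟨h0, h1⟩)]
    have spec := Classical.choose_spec (claim ε h0 h1)
    exact ⟨spec.1, spec.2.1⟩
  · intro ε h0 h1 K _ n φ
    dsimp only
    rw [dif_pos (show 0 < ε ∧ ε < 1/10 from ⟨h0, h1⟩)]
    exact (Classical.choose_spec (claim ε h0 h1)).2.2 K n φ
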